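/- arXiv:2104.04714 — 4 statements merged into one kernel-verified Lean document; each statement's English description precedes it below -/
import Mathlib

section
/- The function f₂(x) = (1 + log x − x) log(1−x) + x log x satisfies f₂(x) ≤ 0 for all x ∈ (0,1) and lim_{x→0⁺} f₂(x) = 0. -/
open Real Set Filter

lemma xlogx_tendsto : Filter.Tendsto (fun x : ℝ => x * Real.log x)
    (nhdsWithin 0 (Set.Ioi 0)) (nhds 0) := by
  have h := tendsto_log_mul_rpow_nhdsGT_zero (r := 1) one_pos
  simp only [Real.rpow_one] at h
  simpa only [mul_comm] using h

lemma slope_tendsto : Filter.Tendsto (fun x : ℝ => Real.log (1 - x) / x)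
    (nhdsWithin 0 (Set.Ioi 0)) (nhds (-1)) := by
  have hd : HasDerivAt (fun x : ℝ => Real.log (1 - x)) (-1) 0 := by
    have h1 : HasDerivAt (fun x : ℝ => 1 - x) (-1) 0 := by
      simpa using (hasDerivAt_id (0:ℝ)).const_sub 1
    have := (Real.hasDerivAt_log (by norm_num : (1:ℝ) - 0 ≠ 0)).comp 0 h1
    simpa [Function.comp_def] using this
  have h := hasDerivAt_iff_tendsto_slope.mp hd
  have hle : nhdsWithin (0:ℝ) (Set.Ioi 0) ≤ nhdsWithin 0 {(0:ℝ)}ᶜ :=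
    nhdsWithin_mono _ (fun x hx => ne_of_gt hx)
  refine (h.mono_left hle).congr (fun x => ?_)
  simp [slope_def_field, div_eq_mul_inv, mul_comm]

/-- `f₂(x) = (1 + log x - x) log(1-x) + x log x` is nonpositive on `(0,1)` and tends
to `0` as `x → 0⁺`. -/
theorem f2_nonpos :
    (∀ x ∈ Set.Ioo (0 : ℝ) 1,
      (1 + Real.log x - x) * Real.log (1 - x) + x * Real.log x ≤ 0) ∧
    Filter.Tendsto (fun x : ℝ => (1 + Real.log x - x) * Real.log (1 - x) + x * Real.log x)
      (nhdsWithin 0 (Set.Ioi 0)) (nhds 0) := by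
  constructor
  · rintro x ⟨hx0, hx1⟩
    have h1x : (0:ℝ) < 1 - x := by linarith
    -- a = x - 1 - log x ≥ 0
    have ha : Real.log x ≤ x - 1 := Real.log_le_sub_one_of_pos hx0
    -- b = -log(1-x) ≥ 0 and ≤ x/(1-x)
    have hb0 : Real.log (1 - x) ≤ 0 := Real.log_nonpos h1x.le (by linarith)
    have hb : -Real.log (1 - x) ≤ x / (1 - x) := by
      have := Real.log_le_sub_one_of_pos (inv_pos.mpr h1x)
      rw [Real.log_inv] at this
      have : -Real.log (1 - x) ≤ (1 - x)⁻¹ - 1 := this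
      calc -Real.log (1 - x) ≤ (1 - x)⁻¹ - 1 := this
        _ = x / (1 - x) := by field_simp; ring
    -- a ≤ (1-x)(-log x), from log x ≥ 1 - 1/x
    have hc : 1 - x⁻¹ ≤ Real.log x := Real.one_sub_inv_le_log_of_pos hx0
    have ha' : x - 1 - Real.log x ≤ (1 - x) * (-Real.log x) := by
      have hxl : x - 1 ≤ x * Real.log x := by
        have := mul_le_mul_of_nonneg_left hc hx0.le
        have hx' : x * (1 - x⁻¹) = x - 1 := by field_simp
        linarith [hx' ▸ this]
      nlinarith
    have hbx : -Real.log (1 - x) * (1 - x) ≤ x := by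
      have := mul_le_mul_of_nonneg_right hb h1x.le
      calc -Real.log (1 - x) * (1 - x) ≤ x / (1 - x) * (1 - x) := this
        _ = x := by field_simp
    -- combine: (x - 1 - log x) * (-log(1-x)) ≤ x * (-log x)
    have hlogx : Real.log x ≤ 0 := Real.log_nonpos hx0.le hx1.le
    nlinarith [mul_le_mul ha' hb (by linarith) (by nlinarith),
      mul_nonneg (neg_nonneg.mpr hlogx) (neg_nonneg.mpr hb0)]
  · have h1 : Filter.Tendsto (fun x : ℝ => (x * Real.log x) * (Real.log (1 - x) / x))
        (nhdsWithin 0 (Set.Ioi 0)) (nhds 0) := by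
      have := xlogx_tendsto.mul slope_tendsto
      simpa using this
    have h2 : Filter.Tendsto (fun x : ℝ => (1 - x) * Real.log (1 - x))
        (nhdsWithin 0 (Set.Ioi 0)) (nhds 0) := by
      have hc : ContinuousAt (fun x : ℝ => (1 - x) * Real.log (1 - x)) 0 := by
        apply ContinuousAt.mul
        · fun_prop
        · exact (Real.continuousAt_log (by norm_num)).comp (by fun_prop)
      have := hc.tendsto.mono_left (nhdsWithin_le_nhds (s := Set.Ioi (0:ℝ)))
      simpa using this
    have h := (h1.add h2).add xlogx_tendsto
    rw [show (0:ℝ) + 0 + 0 = 0 by norm_num] at h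
    refine h.congr' ?_
    filter_upwards [self_mem_nhdsWithin] with x (hx : x ∈ Set.Ioi (0:ℝ))
    have hxne : x ≠ 0 := ne_of_gt hx
    field_simp
    ring
end

section
/- The function f₁(x) = (x log x)/((1−x) log(1−x)) is nonincreasing on (0,1). -/
open Real Set

lemma aux_log_lt_zero {x : ℝ} (hx0 : 0 < x) (hx1 : x < 1) : Real.log x < 0 :=
  Real.log_neg hx0 hx1

lemma aux_neg_log_le {x : ℝ} (hx0 : 0 < x) : x * (-Real.log x) ≤ 1 - x := by
  have h := Real.log_le_sub_one_of_pos (show (0:ℝ) < 1/x by positivity)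
  rw [one_div, Real.log_inv] at h
  have hx : x ≠ 0 := ne_of_gt hx0
  have := mul_le_mul_of_nonneg_left h (le_of_lt hx0)
  calc x * (-Real.log x) ≤ x * (x⁻¹ - 1) := this
    _ = 1 - x := by field_simp

lemma key_ineq {x : ℝ} (hx0 : 0 < x) (hx1 : x < 1) :
    Real.log x * Real.log (1-x) ≤ (1-x) * (-Real.log (1-x)) + x * (-Real.log x) := by
  have h1x0 : 0 < 1 - x := by linarith
  have hL : Real.log x < 0 := aux_log_lt_zero hx0 hx1
  have hM : Real.log (1-x) < 0 := aux_log_lt_zero h1x0 (by linarith)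
  have hA : x * (-Real.log x) ≤ 1 - x := aux_neg_log_le hx0
  have hB : (1-x) * (-Real.log (1-x)) ≤ x := by
    have := aux_neg_log_le h1x0
    linarith [this]
  nlinarith [mul_le_mul_of_nonneg_right hA (le_of_lt (neg_pos.mpr hM)),
    mul_le_mul_of_nonneg_right hB (le_of_lt (neg_pos.mpr hL))]

/-- `f₁(x) = (x log x) / ((1-x) log(1-x))` is nonincreasing on `(0,1)`. -/
theorem f1_antitone :
    AntitoneOn (fun x : ℝ => (x * Real.log x) / ((1 - x) * Real.log (1 - x)))
      (Set.Ioo (0 : ℝ) 1) := by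
  have hderiv : ∀ x ∈ Set.Ioo (0:ℝ) 1, HasDerivAt
      (fun x : ℝ => (x * Real.log x) / ((1 - x) * Real.log (1 - x)))
      (((Real.log x + 1) * ((1 - x) * Real.log (1 - x)) -
        (x * Real.log x) * ((Real.log (1-x) + 1) * (-1))) /
        ((1 - x) * Real.log (1 - x))^2) x := by
    intro x hx
    obtain ⟨hx0, hx1⟩ := hx
    have h1x0 : (0:ℝ) < 1 - x := by linarith
    have hM : Real.log (1-x) < 0 := aux_log_lt_zero h1x0 (by linarith)
    have hD : (1 - x) * Real.log (1 - x) ≠ 0 := by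
      apply mul_ne_zero (ne_of_gt h1x0) (ne_of_lt hM)
    have hN : HasDerivAt (fun x : ℝ => x * Real.log x) (Real.log x + 1) x :=
      Real.hasDerivAt_mul_log (ne_of_gt hx0)
    have hDfun : HasDerivAt (fun x : ℝ => (1 - x) * Real.log (1 - x))
        ((Real.log (1-x) + 1) * (-1)) x := by
      have hinner : HasDerivAt (fun x : ℝ => 1 - x) (-1) x := by
        simpa using (hasDerivAt_id x).const_sub 1
      exact (Real.hasDerivAt_mul_log (ne_of_gt h1x0)).comp x hinner
    exact hN.div hDfun hD
  apply antitoneOn_of_deriv_nonpos (convex_Ioo 0 1)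
  · apply ContinuousOn.div
    · exact (continuousOn_id.mul (Real.continuousOn_log.comp continuousOn_id
        (fun x hx => ne_of_gt hx.1)))
    · exact ((continuousOn_const.sub continuousOn_id).mul
        (Real.continuousOn_log.comp (continuousOn_const.sub continuousOn_id)
          (fun x hx => by
            simp only [Set.mem_Ioo] at hx
            simp only [Set.mem_compl_iff, Set.mem_singleton_iff]
            intro h; linarith [hx.2])))
    · intro x hx
      have h1x0 : (0:ℝ) < 1 - x := by linarith [hx.2]
      have hM : Real.log (1-x) < 0 := aux_log_lt_zero h1x0 (by linarith [hx.1])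
      exact mul_ne_zero (ne_of_gt h1x0) (ne_of_lt hM)
  · intro x hx
    rw [interior_Ioo] at hx
    exact ((hderiv x hx).differentiableAt).differentiableWithinAt
  · intro x hx
    rw [interior_Ioo] at hx
    rw [(hderiv x hx).deriv]
    obtain ⟨hx0, hx1⟩ := hx
    have h1x0 : (0:ℝ) < 1 - x := by linarith
    have hL : Real.log x < 0 := aux_log_lt_zero hx0 hx1
    have hM : Real.log (1-x) < 0 := aux_log_lt_zero h1x0 (by linarith)
    have hkey := key_ineq hx0 hx1
    apply div_nonpos_of_nonpos_of_nonneg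
    · nlinarith [hkey]
    · positivity
end

section
/- For 0 < p₂ < p₁ < 1, the function f(D) = log(1−p₂^D)/log(1−p₁^D) is strictly decreasing in D on (0,∞). -/
open Real Set

/-- Key elementary inequality: for `0 < t < 1`, with `a = -log t`, `b = -log (1-t)`,
we have `a*b < t*a + (1-t)*b`. -/
private lemma key_ineq_s14 {t : ℝ} (h0 : 0 < t) (h1 : t < 1) :
    (-Real.log t) * (-Real.log (1 - t)) <
      t * (-Real.log t) + (1 - t) * (-Real.log (1 - t)) := by
  have h1t : (0:ℝ) < 1 - t := by linarith
  have ha : t * (-Real.log t) < 1 - t := by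
    have h := Real.log_lt_sub_one_of_pos (show (0:ℝ) < 1/t by positivity)
      (by intro h; rw [div_eq_one_iff_eq (ne_of_gt h0)] at h; linarith)
    rw [Real.log_div one_ne_zero (ne_of_gt h0), Real.log_one] at h
    have h2 := mul_lt_mul_of_pos_left h h0
    calc t * (-Real.log t) = t * (0 - Real.log t) := by ring
      _ < t * (1/t - 1) := h2
      _ = 1 - t := by field_simp
  have hb : (1 - t) * (-Real.log (1 - t)) < t := by
    have h := Real.log_lt_sub_one_of_pos (show (0:ℝ) < 1/(1-t) by positivity)
      (by intro h; rw [div_eq_one_iff_eq (ne_of_gt h1t)] at h; linarith)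
    rw [Real.log_div one_ne_zero (ne_of_gt h1t), Real.log_one] at h
    have h2 := mul_lt_mul_of_pos_left h h1t
    calc (1-t) * (-Real.log (1-t)) = (1-t) * (0 - Real.log (1-t)) := by ring
      _ < (1-t) * (1/(1-t) - 1) := h2
      _ = t := by field_simp; ring
  have hbt : t < -Real.log (1 - t) := by
    have h := Real.log_lt_sub_one_of_pos h1t (by intro h; linarith)
    linarith
  have hapos : 0 < -Real.log t := by
    have := Real.log_neg h0 h1
    linarith
  set a := -Real.log t with hA
  set b := -Real.log (1 - t) with hB
  have h2' := mul_lt_mul_of_pos_right (show t * a < 1 - t from ha)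
    (show 0 < b - t by linarith)
  have h2 : t * (a * (b - t)) < (1 - t) * (b - t) := by nlinarith [h2']
  have hb2 := mul_lt_mul_of_pos_left hb h1t
  have h3 : (1 - t) * (b - t) < t * ((1 - t) * b) := by nlinarith [hb2]
  have h5 : a * (b - t) < (1 - t) * b :=
    lt_of_mul_lt_mul_left (h2.trans h3) (le_of_lt h0)
  nlinarith [h5]

/-- `t ↦ (t log t)/((1-t) log(1-t))` is strictly decreasing on `(0,1)`. -/
private lemma h_anti : StrictAntiOn
    (fun t : ℝ => (t * Real.log t) / ((1 - t) * Real.log (1 - t))) (Set.Ioo 0 1) := by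
  have hderiv : ∀ t ∈ Set.Ioo (0:ℝ) 1, HasDerivAt
      (fun t : ℝ => (t * Real.log t) / ((1 - t) * Real.log (1 - t)))
      (((Real.log t + 1) * ((1 - t) * Real.log (1 - t)) -
        (t * Real.log t) * ((-1) * Real.log (1 - t) + (1 - t) * (-1 / (1 - t)))) /
        ((1 - t) * Real.log (1 - t))^2) t := by
    intro t ht
    obtain ⟨h0, h1⟩ := ht
    have h1t : (0:ℝ) < 1 - t := by linarith
    have hlog1t : Real.log (1 - t) ≠ 0 :=
      ne_of_lt (Real.log_neg h1t (by linarith))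
    have hden : (1 - t) * Real.log (1 - t) ≠ 0 :=
      mul_ne_zero (ne_of_gt h1t) hlog1t
    have hnum : HasDerivAt (fun t : ℝ => t * Real.log t) (Real.log t + 1) t := by
      have := (hasDerivAt_id' (x := t)).mul (Real.hasDerivAt_log (ne_of_gt h0))
      rw [mul_inv_cancel₀ (ne_of_gt h0), one_mul] at this
      exact this
    have hd2 : HasDerivAt (fun t : ℝ => (1 - t) * Real.log (1 - t))
        ((-1) * Real.log (1 - t) + (1 - t) * (-1 / (1 - t))) t := by
      have hin : HasDerivAt (fun t : ℝ => 1 - t) (-1) t := by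
        simpa using (hasDerivAt_id' (x := t)).const_sub (1:ℝ)
      have hlog : HasDerivAt (fun t : ℝ => Real.log (1 - t)) (-1 / (1 - t)) t :=
        hin.log (ne_of_gt h1t)
      exact hin.mul hlog
    exact hnum.div hd2 hden
  apply strictAntiOn_of_deriv_neg (convex_Ioo 0 1)
  · intro t ht
    exact ((hderiv t ht).differentiableAt).continuousAt.continuousWithinAt
  · rw [interior_Ioo]
    intro t ht
    rw [(hderiv t ht).deriv]
    obtain ⟨h0, h1⟩ := ht
    have h1t : (0:ℝ) < 1 - t := by linarith
    have hlog1t : Real.log (1 - t) < 0 := Real.log_neg h1t (by linarith)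
    have hden : (0:ℝ) < ((1 - t) * Real.log (1 - t))^2 :=
      pow_two_pos_of_ne_zero (mul_ne_zero (ne_of_gt h1t) (ne_of_lt hlog1t))
    apply div_neg_of_neg_of_pos _ hden
    have key := key_ineq_s14 h0 h1
    have hfs : (1 - t) * (-1 / (1 - t)) = -1 := by field_simp
    rw [hfs]
    nlinarith [key]

/-- Two-point version: for `0 < y < x < 1`,
`x log x * ((1-y) log (1-y)) < y log y * ((1-x) log(1-x))`. -/
private lemma two_point {x y : ℝ} (hy : 0 < y) (hyx : y < x) (hx : x < 1) :
    x * Real.log x * ((1 - y) * Real.log (1 - y)) <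
      y * Real.log y * ((1 - x) * Real.log (1 - x)) := by
  have hx0 : 0 < x := hy.trans hyx
  have hmem_x : x ∈ Set.Ioo (0:ℝ) 1 := ⟨hx0, hx⟩
  have hmem_y : y ∈ Set.Ioo (0:ℝ) 1 := ⟨hy, by linarith⟩
  have h := h_anti hmem_y hmem_x hyx
  have hBx : (1 - x) * Real.log (1 - x) < 0 :=
    mul_neg_of_pos_of_neg (by linarith) (Real.log_neg (by linarith) (by linarith))
  have hBy : (1 - y) * Real.log (1 - y) < 0 :=
    mul_neg_of_pos_of_neg (by linarith) (Real.log_neg (by linarith) (by linarith))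
  have h' : (-(x * Real.log x)) / (-((1 - x) * Real.log (1 - x))) <
      (-(y * Real.log y)) / (-((1 - y) * Real.log (1 - y))) := by
    simpa [neg_div_neg_eq] using h
  rw [div_lt_div_iff₀ (by linarith) (by linarith)] at h'
  nlinarith [h']

/-- For `0 < p₂ < p₁ < 1`, the function `f(D) = log(1 - p₂^D) / log(1 - p₁^D)` is
strictly decreasing in `D` on `(0, ∞)`. -/
theorem f_strict_anti (p₁ p₂ : ℝ) (h0 : 0 < p₂) (h21 : p₂ < p₁) (h1 : p₁ < 1) :
    StrictAntiOn (fun D : ℝ => Real.log (1 - p₂ ^ D) / Real.log (1 - p₁ ^ D))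
      (Set.Ioi (0 : ℝ)) := by
  have hp10 : 0 < p₁ := h0.trans h21
  have hfact : ∀ (p : ℝ), 0 < p → p < 1 → ∀ D : ℝ, 0 < D →
      0 < p ^ D ∧ p ^ D < 1 := by
    intro p hp hp1 D hD
    exact ⟨Real.rpow_pos_of_pos hp D, Real.rpow_lt_one (le_of_lt hp) hp1 hD⟩
  have hasD : ∀ (p : ℝ), 0 < p → p < 1 → ∀ D : ℝ, 0 < D →
      HasDerivAt (fun D : ℝ => Real.log (1 - p ^ D))
        ((0 - p ^ D * Real.log p) / (1 - p ^ D)) D := by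
    intro p hp hp1 D hD
    obtain ⟨hpow0, hpow1⟩ := hfact p hp hp1 D hD
    have hrpow : HasDerivAt (fun D : ℝ => p ^ D) (p ^ D * Real.log p) D :=
      (Real.hasStrictDerivAt_const_rpow hp D).hasDerivAt
    have hin : HasDerivAt (fun D : ℝ => 1 - p ^ D) (0 - p ^ D * Real.log p) D :=
      (hasDerivAt_const D (1:ℝ)).sub hrpow
    exact hin.log (by intro hc; nlinarith)
  have hderiv : ∀ D ∈ Set.Ioi (0:ℝ), HasDerivAt
      (fun D : ℝ => Real.log (1 - p₂ ^ D) / Real.log (1 - p₁ ^ D))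
      ((((0 - p₂ ^ D * Real.log p₂) / (1 - p₂ ^ D)) * Real.log (1 - p₁ ^ D) -
        Real.log (1 - p₂ ^ D) * ((0 - p₁ ^ D * Real.log p₁) / (1 - p₁ ^ D))) /
        (Real.log (1 - p₁ ^ D))^2) D := by
    intro D hD
    rw [Set.mem_Ioi] at hD
    obtain ⟨hx0, hx1⟩ := hfact p₁ hp10 h1 D hD
    have hlogne : Real.log (1 - p₁ ^ D) ≠ 0 :=
      ne_of_lt (Real.log_neg (by linarith) (by linarith))
    exact (hasD p₂ h0 (h21.trans h1) D hD).div (hasD p₁ hp10 h1 D hD) hlogne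
  apply strictAntiOn_of_deriv_neg (convex_Ioi 0)
  · intro D hD
    exact ((hderiv D hD).differentiableAt).continuousAt.continuousWithinAt
  · rw [interior_Ioi]
    intro D hD
    rw [(hderiv D hD).deriv]
    have hDpos : 0 < D := hD
    obtain ⟨hx0, hx1⟩ := hfact p₁ hp10 h1 D hDpos
    obtain ⟨hy0, hy1⟩ := hfact p₂ h0 (h21.trans h1) D hDpos
    set x := p₁ ^ D with hxdef
    set y := p₂ ^ D with hydef
    have hyx : y < x := Real.rpow_lt_rpow (le_of_lt h0) h21 hDpos
    have hlogx : Real.log (1 - x) < 0 := Real.log_neg (by linarith) (by linarith)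
    have hlogy : Real.log (1 - y) < 0 := Real.log_neg (by linarith) (by linarith)
    apply div_neg_of_neg_of_pos _ (pow_two_pos_of_ne_zero (ne_of_lt hlogx))
    have h1y : (1:ℝ) - y ≠ 0 := ne_of_gt (by linarith)
    have h1x : (1:ℝ) - x ≠ 0 := ne_of_gt (by linarith)
    have hDne : D ≠ 0 := ne_of_gt hDpos
    have hlp1 : Real.log x = D * Real.log p₁ := Real.log_rpow hp10 D
    have hlp2 : Real.log y = D * Real.log p₂ := Real.log_rpow h0 D
    have hq1 : Real.log p₁ = Real.log x / D := by rw [hlp1]; field_simp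
    have hq2 : Real.log p₂ = Real.log y / D := by rw [hlp2]; field_simp
    rw [hq1, hq2]
    have key := two_point hy0 hyx hx1
    have hrw : (0 - y * (Real.log y / D)) / (1 - y) * Real.log (1 - x) -
        Real.log (1 - y) * ((0 - x * (Real.log x / D)) / (1 - x)) =
        (x * Real.log x * ((1 - y) * Real.log (1 - y)) -
         y * Real.log y * ((1 - x) * Real.log (1 - x))) / (D * ((1 - y) * (1 - x))) := by
      field_simp
      ring
    rw [hrw]
    exact div_neg_of_neg_of_pos (by linarith [key])
      (mul_pos hDpos (mul_pos (by linarith) (by linarith)))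
end

section
/- For 0 < p₂ < p₁ < 1 and η₁ ∈ (0,1), lim_{D→∞} [1 − (1−p₂^D)·η₁^{log(1−p₂^D)/log(1−p₁^D)}] = 0. Consequently, for every η₂ ∈ (0,1) there exists D* ∈ ℕ such that for all D ≥ D*, 1 − (1−p₂^D)^{log(η₁)/log(1−p₁^D) + 1} ≤ η₂. -/
open Real Filter

lemma key_eq (p₂ p₁ η₁ x : ℝ) (ha : 0 < 1 - p₂ ^ x) (hη : 0 < η₁) :
    (1 - p₂ ^ x) ^ (Real.log η₁ / Real.log (1 - p₁ ^ x) + 1)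
      = (1 - p₂ ^ x) * η₁ ^ (Real.log (1 - p₂ ^ x) / Real.log (1 - p₁ ^ x)) := by
  rw [Real.rpow_add ha, Real.rpow_one, Real.rpow_def_of_pos ha, Real.rpow_def_of_pos hη,
    mul_comm]
  congr 1
  ring_nf

/-- For `0 < p₂ < p₁ < 1` and `η₁ ∈ (0,1)`,
`1 - (1 - p₂^D) η₁^{log(1-p₂^D)/log(1-p₁^D)} → 0` as `D → ∞`; consequently, for every
`η₂ ∈ (0,1)` there exists `D* ∈ ℕ` such that for all `D ≥ D*`,
`1 - (1-p₂^D)^{log η₁ / log(1-p₁^D) + 1} ≤ η₂`. -/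
theorem infrequent_pattern_bound (p₁ p₂ η₁ : ℝ) (h0 : 0 < p₂) (h21 : p₂ < p₁)
    (h1 : p₁ < 1) (hη₁ : η₁ ∈ Set.Ioo (0 : ℝ) 1) :
    Filter.Tendsto
      (fun D : ℝ =>
        1 - (1 - p₂ ^ D) * η₁ ^ (Real.log (1 - p₂ ^ D) / Real.log (1 - p₁ ^ D)))
      Filter.atTop (nhds 0) ∧
    ∀ η₂ ∈ Set.Ioo (0 : ℝ) 1, ∃ Dstar : ℕ, ∀ D : ℕ, Dstar ≤ D →
      1 - (1 - p₂ ^ D) ^ (Real.log η₁ / Real.log (1 - p₁ ^ D) + 1) ≤ η₂ := by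
  obtain ⟨hη0, hη1⟩ := hη₁
  have hp₂1 : p₂ < 1 := h21.trans h1
  have hp₁0 : 0 < p₁ := h0.trans h21
  -- p₂ ^ D → 0
  have hp2to0 : Tendsto (fun D : ℝ => p₂ ^ D) atTop (nhds 0) :=
    tendsto_rpow_atTop_of_base_lt_one p₂ (by linarith) hp₂1
  -- ratio of logs → 0
  have hE0 : Tendsto (fun D : ℝ =>
      Real.log (1 - p₂ ^ D) / Real.log (1 - p₁ ^ D)) atTop (nhds 0) := by
    have hinv : Tendsto (fun D : ℝ => (1 - p₂ ^ D)⁻¹) atTop (nhds 1) := by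
      have := (tendsto_const_nhds.sub hp2to0).inv₀ (by norm_num : (1:ℝ) - 0 ≠ 0)
      simpa using this
    have hratio : Tendsto (fun D : ℝ => (p₂ / p₁) ^ D) atTop (nhds 0) :=
      tendsto_rpow_atTop_of_base_lt_one _
        (by have : (0:ℝ) < p₂ / p₁ := by positivity
            linarith) ((div_lt_one hp₁0).mpr h21)
    have hub : Tendsto (fun D : ℝ => (p₂ / p₁) ^ D * (1 - p₂ ^ D)⁻¹) atTop (nhds 0) := by
      simpa using hratio.mul hinv
    refine tendsto_of_tendsto_of_tendsto_of_le_of_le' tendsto_const_nhds hub ?_ ?_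
    · filter_upwards [eventually_gt_atTop (0:ℝ)] with D hD
      have ha1 : p₂ ^ D < 1 := Real.rpow_lt_one h0.le hp₂1 hD
      have hb1 : p₁ ^ D < 1 := Real.rpow_lt_one hp₁0.le h1 hD
      have ha0 : 0 < p₂ ^ D := Real.rpow_pos_of_pos h0 D
      have hb0 : 0 < p₁ ^ D := Real.rpow_pos_of_pos hp₁0 D
      have hla : Real.log (1 - p₂ ^ D) ≤ 0 := Real.log_nonpos (by linarith) (by linarith)
      have hlb : Real.log (1 - p₁ ^ D) ≤ 0 := Real.log_nonpos (by linarith) (by linarith)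
      exact div_nonneg_of_nonpos hla hlb
    · filter_upwards [eventually_gt_atTop (0:ℝ)] with D hD
      have ha1 : p₂ ^ D < 1 := Real.rpow_lt_one h0.le hp₂1 hD
      have hb1 : p₁ ^ D < 1 := Real.rpow_lt_one hp₁0.le h1 hD
      have ha0 : 0 < p₂ ^ D := Real.rpow_pos_of_pos h0 D
      have hb0 : 0 < p₁ ^ D := Real.rpow_pos_of_pos hp₁0 D
      have hA : 0 < 1 - p₂ ^ D := by linarith
      -- numerator bound: -log(1 - a) ≤ a / (1 - a)
      have hnum : -Real.log (1 - p₂ ^ D) ≤ p₂ ^ D / (1 - p₂ ^ D) := by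
        have h := Real.log_le_sub_one_of_pos (x := (1 - p₂ ^ D)⁻¹) (by positivity)
        rw [Real.log_inv] at h
        have : (1 - p₂ ^ D)⁻¹ - 1 = p₂ ^ D / (1 - p₂ ^ D) := by
          field_simp
          ring
        linarith [this ▸ h]
      -- denominator bound: -log(1 - b) ≥ b
      have hden : p₁ ^ D ≤ -Real.log (1 - p₁ ^ D) := by
        have h := Real.log_le_sub_one_of_pos (x := 1 - p₁ ^ D) (by linarith)
        linarith
      have hdiv : Real.log (1 - p₂ ^ D) / Real.log (1 - p₁ ^ D)
          ≤ (p₂ ^ D / (1 - p₂ ^ D)) / p₁ ^ D := by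
        have := div_le_div₀ (by positivity) hnum hb0 hden
        rwa [neg_div_neg_eq] at this
      calc Real.log (1 - p₂ ^ D) / Real.log (1 - p₁ ^ D)
          ≤ (p₂ ^ D / (1 - p₂ ^ D)) / p₁ ^ D := hdiv
        _ = (p₂ / p₁) ^ D * (1 - p₂ ^ D)⁻¹ := by
            rw [Real.div_rpow h0.le hp₁0.le]
            field_simp
  -- the product tends to 1
  have hprod : Tendsto (fun D : ℝ =>
      (1 - p₂ ^ D) * η₁ ^ (Real.log (1 - p₂ ^ D) / Real.log (1 - p₁ ^ D)))
      atTop (nhds 1) := by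
    have h1' : Tendsto (fun D : ℝ => (1 : ℝ) - p₂ ^ D) atTop (nhds 1) := by
      simpa using tendsto_const_nhds.sub hp2to0
    have h2' : Tendsto (fun D : ℝ =>
        η₁ ^ (Real.log (1 - p₂ ^ D) / Real.log (1 - p₁ ^ D))) atTop (nhds 1) := by
      have := (tendsto_const_nhds (x := η₁) (f := atTop)).rpow hE0 (Or.inl hη0.ne')
      simpa using this
    simpa using h1'.mul h2'
  have part1 : Tendsto
      (fun D : ℝ =>
        1 - (1 - p₂ ^ D) * η₁ ^ (Real.log (1 - p₂ ^ D) / Real.log (1 - p₁ ^ D)))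
      atTop (nhds 0) := by
    simpa using (tendsto_const_nhds (x := (1:ℝ))).sub hprod
  refine ⟨part1, ?_⟩
  intro η₂ hη₂
  have hseq : Tendsto (fun D : ℕ =>
      1 - (1 - p₂ ^ (D:ℝ)) * η₁ ^ (Real.log (1 - p₂ ^ (D:ℝ)) / Real.log (1 - p₁ ^ (D:ℝ))))
      atTop (nhds 0) := part1.comp tendsto_natCast_atTop_atTop
  have hev : ∀ᶠ D : ℕ in atTop,
      1 - (1 - p₂ ^ (D:ℝ)) * η₁ ^ (Real.log (1 - p₂ ^ (D:ℝ)) / Real.log (1 - p₁ ^ (D:ℝ)))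
        ≤ η₂ := hseq.eventually (eventually_le_nhds hη₂.1)
  obtain ⟨N, hN⟩ := hev.exists_forall_of_atTop
  refine ⟨max N 1, fun D hD => ?_⟩
  have hD1 : 1 ≤ D := le_trans (le_max_right N 1) hD
  have hDN : N ≤ D := le_trans (le_max_left N 1) hD
  have hx : (0:ℝ) < (D:ℝ) := by exact_mod_cast hD1
  have ha : 0 < 1 - p₂ ^ ((D:ℕ):ℝ) := by
    have : p₂ ^ ((D:ℕ):ℝ) < 1 := Real.rpow_lt_one h0.le hp₂1 hx
    linarith
  rw [← Real.rpow_natCast p₂ D, ← Real.rpow_natCast p₁ D, key_eq p₂ p₁ η₁ _ ha hη0]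
  exact hN D hDN
end
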